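/- For every γ ∈ (0,1) there exist M > 2 and c > 0 (depending only on γ) such that: for any odd measurable ω with 0 ≤ ω ≤ 1 on (0,∞), ω = 1 on [x₁, x₂], and M x₁ ≤ x₂, the velocity u(x₁) = −∫_0^∞ (|y−x₁|^{−γ} − |y+x₁|^{−γ}) ω(y) dy satisfies u(x₁) ≤ −c x₁^{1−γ}. -/

import Mathlib

open MeasureTheory Set

/-- Mean value estimate: for `0 < a ≤ b`, `a^(-γ) - b^(-γ) ≤ γ a^(-γ-1) (b-a)`. -/
lemma rpow_neg_sub_rpow_neg_le (γ : ℝ) (hγ : 0 < γ) {a b : ℝ} (ha : 0 < a) (hab : a ≤ b) :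
    a ^ (-γ) - b ^ (-γ) ≤ γ * a ^ (-γ - 1) * (b - a) := by
  rcases eq_or_lt_of_le hab with rfl | h
  · simp
  · have cont : ContinuousOn (fun t : ℝ => t ^ (-γ)) (Icc a b) := by
      apply ContinuousOn.rpow_const continuousOn_id
      intro t ht
      exact Or.inl (ha.trans_le ht.1).ne'
    have deriv : ∀ t ∈ Ioo a b, HasDerivAt (fun t : ℝ => t ^ (-γ)) (-γ * t ^ (-γ - 1)) t := by
      intro t ht
      exact Real.hasDerivAt_rpow_const (p := -γ) (Or.inl (ha.trans ht.1).ne')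
    obtain ⟨c, hc, hceq⟩ := exists_hasDerivAt_eq_slope (fun t : ℝ => t ^ (-γ))
      (fun t => -γ * t ^ (-γ - 1)) h cont deriv
    have hba : (0:ℝ) < b - a := sub_pos.2 h
    have key : a ^ (-γ) - b ^ (-γ) = γ * c ^ (-γ - 1) * (b - a) := by
      have h2 := hceq
      rw [eq_div_iff hba.ne'] at h2
      linear_combination h2
    rw [key]
    have hc' : c ^ (-γ - 1) ≤ a ^ (-γ - 1) :=
      Real.rpow_le_rpow_of_nonpos ha hc.1.le (by linarith)
    have : γ * c ^ (-γ - 1) ≤ γ * a ^ (-γ - 1) := by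
      exact mul_le_mul_of_nonneg_left hc' hγ.le
    exact mul_le_mul_of_nonneg_right this hba.le

/-- Key velocity estimate (Lemma 3.3) for the 1D α-patch model: the velocity at
`x₁` is bounded above by `−c x₁^{1−γ}`. -/
theorem patch_velocity_estimate (γ : ℝ) (hγ : 0 < γ) (hγ1 : γ < 1) :
    ∃ M c : ℝ, 2 < M ∧ 0 < c ∧
      ∀ (ω : ℝ → ℝ) (x₁ x₂ : ℝ),
        Measurable ω → (∀ y, ω (-y) = -ω y) →
        (∀ y : ℝ, 0 < y → ω y ∈ Icc (0:ℝ) 1) →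
        (∀ y ∈ Icc x₁ x₂, ω y = 1) →
        0 < x₁ → M * x₁ ≤ x₂ →
        (-∫ y in Ioi (0:ℝ), (|y - x₁| ^ (-γ) - |y + x₁| ^ (-γ)) * ω y) ≤
          -c * x₁ ^ (1 - γ) := by
  refine ⟨3, 2 ^ (-γ) - 3 ^ (-γ), by norm_num, ?_, ?_⟩
  · have h23 : (3:ℝ) ^ (-γ) < 2 ^ (-γ) :=
      Real.rpow_lt_rpow_of_neg (by norm_num) (by norm_num) (by linarith)
    linarith
  intro ω x₁ x₂ hmeas _hodd hbound hpatch hx₁ hMx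
  set g : ℝ → ℝ := fun y => |y - x₁| ^ (-γ) - |y + x₁| ^ (-γ) with hgdef
  set f : ℝ → ℝ := fun y => g y * ω y with hfdef
  have hgmeas : Measurable g := by
    apply Measurable.sub <;> measurability
  have hfmeas : Measurable f := hgmeas.mul hmeas
  -- a.e. avoid the single point x₁
  have hae : ∀ᵐ y : ℝ ∂(volume : Measure ℝ), y ≠ x₁ := by
    rw [ae_iff]
    have : {y : ℝ | ¬ y ≠ x₁} = {x₁} := by ext; simp
    rw [this]
    exact measure_singleton x₁
  -- pointwise nonnegativity and upper bound of g
  have hg_nonneg : ∀ y : ℝ, 0 < y → y ≠ x₁ → 0 ≤ g y := by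
    intro y hy hne
    have habs : 0 < |y - x₁| := abs_pos.2 (sub_ne_zero.2 hne)
    have h2 : |y - x₁| ≤ y + x₁ := abs_le.2 ⟨by linarith, by linarith⟩
    have h3 : |y + x₁| = y + x₁ := abs_of_pos (by linarith)
    have := Real.rpow_le_rpow_of_nonpos habs h2 (by linarith : -γ ≤ 0)
    simp only [hgdef, h3]
    linarith
  have hg_le : ∀ y : ℝ, 0 < y → g y ≤ |y - x₁| ^ (-γ) := by
    intro y hy
    have : 0 ≤ |y + x₁| ^ (-γ) := Real.rpow_nonneg (abs_nonneg _) _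
    simp only [hgdef]
    linarith
  have hω0 : ∀ y : ℝ, 0 < y → 0 ≤ ω y := fun y hy => (hbound y hy).1
  have hω1 : ∀ y : ℝ, 0 < y → ω y ≤ 1 := fun y hy => (hbound y hy).2
  have hf_abs : ∀ y : ℝ, 0 < y → y ≠ x₁ → |f y| ≤ g y := by
    intro y hy hne
    have h0 : 0 ≤ g y := hg_nonneg y hy hne
    have : |f y| = g y * ω y := by
      rw [abs_of_nonneg (mul_nonneg h0 (hω0 y hy))]
    rw [this]
    calc g y * ω y ≤ g y * 1 := mul_le_mul_of_nonneg_left (hω1 y hy) h0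
    _ = g y := mul_one _
  -- Integrability on (0, x₁]
  have hI1 : IntegrableOn f (Ioc 0 x₁) volume := by
    have hb1 : IntegrableOn (fun y : ℝ => (x₁ - y) ^ (-γ)) (Ioc 0 x₁) volume := by
      have h := (intervalIntegral.intervalIntegrable_rpow'
        (show (-1:ℝ) < -γ by linarith) (a := 0) (b := x₁)).comp_sub_left x₁
      simp only [sub_zero, sub_self] at h
      exact (intervalIntegrable_iff_integrableOn_Ioc_of_le hx₁.le).mp h.symm
    refine Integrable.mono' hb1 (hfmeas.aestronglyMeasurable) ?_
    filter_upwards [ae_restrict_mem measurableSet_Ioc, ae_restrict_of_ae hae] with y hy hne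
    have hy0 : 0 < y := hy.1
    have habs : |y - x₁| = x₁ - y := by
      rw [abs_of_nonpos (by linarith [hy.2] : y - x₁ ≤ 0), neg_sub]
    calc ‖f y‖ = |f y| := rfl
    _ ≤ g y := hf_abs y hy0 hne
    _ ≤ |y - x₁| ^ (-γ) := hg_le y hy0
    _ = (x₁ - y) ^ (-γ) := by rw [habs]
  -- Integrability on (x₁, 2x₁]
  have hI2 : IntegrableOn f (Ioc x₁ (2 * x₁)) volume := by
    have hb2 : IntegrableOn (fun y : ℝ => (y - x₁) ^ (-γ)) (Ioc x₁ (2 * x₁)) volume := by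
      have h := (intervalIntegral.intervalIntegrable_rpow'
        (show (-1:ℝ) < -γ by linarith) (a := 0) (b := x₁)).comp_sub_right x₁
      simp only [zero_add] at h
      have hx : x₁ + x₁ = 2 * x₁ := by ring
      rw [hx] at h
      exact (intervalIntegrable_iff_integrableOn_Ioc_of_le (by linarith)).mp h
    refine Integrable.mono' hb2 (hfmeas.aestronglyMeasurable) ?_
    filter_upwards [ae_restrict_mem measurableSet_Ioc] with y hy
    have hy0 : 0 < y := lt_trans hx₁ hy.1
    have hne : y ≠ x₁ := ne_of_gt hy.1
    have habs : |y - x₁| = y - x₁ := abs_of_pos (by linarith [hy.1])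
    calc ‖f y‖ = |f y| := rfl
    _ ≤ g y := hf_abs y hy0 hne
    _ ≤ |y - x₁| ^ (-γ) := hg_le y hy0
    _ = (y - x₁) ^ (-γ) := by rw [habs]
  -- Integrability on (2x₁, ∞)
  have hI3 : IntegrableOn f (Ioi (2 * x₁)) volume := by
    have hb3 : IntegrableOn (fun y : ℝ => (y - x₁) ^ (-γ - 1)) (Ioi (2 * x₁)) volume := by
      have base : IntegrableOn (fun t : ℝ => t ^ (-γ - 1)) (Ioi x₁) volume :=
        integrableOn_Ioi_rpow_of_lt (by linarith) hx₁
      have hmp : MeasurePreserving (fun y : ℝ => y - x₁) volume volume :=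
        measurePreserving_sub_right volume x₁
      have hemb : MeasurableEmbedding (fun y : ℝ => y - x₁) :=
        (Homeomorph.subRight x₁).measurableEmbedding
      have hpre : (fun y : ℝ => y - x₁) ⁻¹' Ioi x₁ = Ioi (2 * x₁) := by
        ext y
        simp only [mem_preimage, mem_Ioi]
        constructor <;> intro h <;> linarith
      have := (hmp.integrableOn_comp_preimage hemb
        (f := fun t : ℝ => t ^ (-γ - 1)) (s := Ioi x₁)).mpr base
      rwa [hpre] at this
    refine Integrable.mono' (hb3.const_mul (2 * γ * x₁)) (hfmeas.aestronglyMeasurable) ?_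
    filter_upwards [ae_restrict_mem measurableSet_Ioi] with y hy
    simp only [mem_Ioi] at hy
    have hy0 : 0 < y := by linarith
    have hne : y ≠ x₁ := by intro h; rw [h] at hy; linarith
    have h1 : 0 < y - x₁ := by linarith
    have habs1 : |y - x₁| = y - x₁ := abs_of_pos h1
    have habs2 : |y + x₁| = y + x₁ := abs_of_pos (by linarith)
    have hmvt := rpow_neg_sub_rpow_neg_le γ hγ h1 (by linarith : y - x₁ ≤ y + x₁)
    have heq : (y + x₁) - (y - x₁) = 2 * x₁ := by ring
    rw [heq] at hmvt
    calc ‖f y‖ = |f y| := rfl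
    _ ≤ g y := hf_abs y hy0 hne
    _ = (y - x₁) ^ (-γ) - (y + x₁) ^ (-γ) := by simp only [hgdef, habs1, habs2]
    _ ≤ γ * (y - x₁) ^ (-γ - 1) * (2 * x₁) := hmvt
    _ = 2 * γ * x₁ * (y - x₁) ^ (-γ - 1) := by ring
  -- total integrability
  have hIoi : IntegrableOn f (Ioi 0) volume := by
    have hset : Ioi (0:ℝ) = (Ioc 0 x₁ ∪ Ioc x₁ (2 * x₁)) ∪ Ioi (2 * x₁) := by
      rw [Ioc_union_Ioc_eq_Ioc hx₁.le (by linarith), Ioc_union_Ioi_eq_Ioi (by linarith)]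
    rw [hset]
    exact (hI1.union hI2).union hI3
  -- the integral over (2x₁, 3x₁] lower-bounds the full integral
  have hsub : Ioc (2 * x₁) (3 * x₁) ⊆ Ioi (0:ℝ) := by
    intro y hy
    simp only [mem_Ioi]
    have := hy.1
    linarith
  have hf_nonneg : 0 ≤ᶠ[ae (volume.restrict (Ioi (0:ℝ)))] f := by
    filter_upwards [ae_restrict_mem measurableSet_Ioi, ae_restrict_of_ae hae] with y hy hne
    exact mul_nonneg (hg_nonneg y hy hne) (hω0 y hy)
  have hmono : (∫ y in Ioc (2 * x₁) (3 * x₁), f y) ≤ ∫ y in Ioi (0:ℝ), f y :=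
    setIntegral_mono_set hIoi hf_nonneg (HasSubset.Subset.eventuallyLE hsub)
  -- lower bound on (2x₁, 3x₁]
  set C₀ : ℝ := (2 * x₁) ^ (-γ) - (3 * x₁) ^ (-γ) with hC₀
  have hconst : ∀ y ∈ Ioc (2 * x₁) (3 * x₁), C₀ ≤ f y := by
    intro y hy
    have hy1 : 2 * x₁ < y := hy.1
    have hy2 : y ≤ 3 * x₁ := hy.2
    have hωy : ω y = 1 := hpatch y ⟨by linarith, by linarith⟩
    have habs1 : |y - x₁| = y - x₁ := abs_of_pos (by linarith)
    have habs2 : |y + x₁| = y + x₁ := abs_of_pos (by linarith)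
    have hb1 : (2 * x₁) ^ (-γ) ≤ (y - x₁) ^ (-γ) :=
      Real.rpow_le_rpow_of_nonpos (by linarith) (by linarith) (by linarith)
    have hb2 : (y + x₁) ^ (-γ) ≤ (3 * x₁) ^ (-γ) :=
      Real.rpow_le_rpow_of_nonpos (by positivity) (by linarith) (by linarith)
    have : f y = (y - x₁) ^ (-γ) - (y + x₁) ^ (-γ) := by
      simp only [hfdef, hgdef, hωy, mul_one, habs1, habs2]
    rw [this]
    simp only [hC₀]
    linarith
  have hIsub : IntegrableOn f (Ioc (2 * x₁) (3 * x₁)) volume := hIoi.mono_set hsub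
  have hvol : (volume (Ioc (2 * x₁) (3 * x₁))).toReal = x₁ := by
    rw [Real.volume_Ioc, ENNReal.toReal_ofReal (by linarith)]
    ring
  have hlow : C₀ * x₁ ≤ ∫ y in Ioc (2 * x₁) (3 * x₁), f y := by
    have := setIntegral_ge_of_const_le (μ := volume) measurableSet_Ioc
      (measure_Ioc_lt_top).ne hconst hIsub
    rw [Measure.real, hvol, smul_eq_mul] at this
    linarith
  -- identify C₀ * x₁ with the claimed quantity
  have hid : C₀ * x₁ = (2 ^ (-γ) - 3 ^ (-γ)) * x₁ ^ (1 - γ) := by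
    have h2 : (2 * x₁) ^ (-γ) = 2 ^ (-γ) * x₁ ^ (-γ) :=
      Real.mul_rpow (by norm_num) hx₁.le
    have h3 : (3 * x₁) ^ (-γ) = 3 ^ (-γ) * x₁ ^ (-γ) :=
      Real.mul_rpow (by norm_num) hx₁.le
    have hx : x₁ ^ (-γ) * x₁ = x₁ ^ (1 - γ) := by
      rw [show (1:ℝ) - γ = -γ + 1 by ring, Real.rpow_add hx₁, Real.rpow_one]
    simp only [hC₀, h2, h3]
    calc (2 ^ (-γ) * x₁ ^ (-γ) - 3 ^ (-γ) * x₁ ^ (-γ)) * x₁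
        = (2 ^ (-γ) - 3 ^ (-γ)) * (x₁ ^ (-γ) * x₁) := by ring
    _ = (2 ^ (-γ) - 3 ^ (-γ)) * x₁ ^ (1 - γ) := by rw [hx]
  have hfinal : (2 ^ (-γ) - 3 ^ (-γ)) * x₁ ^ (1 - γ) ≤ ∫ y in Ioi (0:ℝ), f y := by
    calc (2 ^ (-γ) - 3 ^ (-γ)) * x₁ ^ (1 - γ) = C₀ * x₁ := hid.symm
    _ ≤ ∫ y in Ioc (2 * x₁) (3 * x₁), f y := hlow
    _ ≤ ∫ y in Ioi (0:ℝ), f y := hmono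
  have : (∫ y in Ioi (0:ℝ), (|y - x₁| ^ (-γ) - |y + x₁| ^ (-γ)) * ω y)
      = ∫ y in Ioi (0:ℝ), f y := rfl
  rw [this, neg_mul]
  linarith
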